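/- Let A = {x₁,...,x_a} and B = {y₁,...,y_b} be nonempty finite sets in a real normed space S such that any two distinct points within A or within B are at distance ≥ 1. Let υ be a unit vector with supporting functional f, and assume f(x₁) ≤ ... ≤ f(x_a), f(y₁) ≤ ... ≤ f(y_b), and |f(x) - f(y)| ≥ 1/2 for distinct x,y both in A or both in B. Then A × B (identifying (x,y) with x+y) can be decomposed into n = min(a,b) sets S_{m-n+1}, S_{m-n+3}, ..., S_{m+n-1} with m = max(a,b), where |S_t| = t and for each pair of distinct elements u, v ∈ S_t one has ‖u - v‖ ≥ 1 and moreover |f(u) - f(v)| ≥ 1/2. -/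
import Mathlib

lemma fin_card_le (n k : ℕ) (h : k < n) :
    ((Finset.univ : Finset (Fin n)).filter (fun i : Fin n => (i:ℕ) ≤ k)).card = k + 1 := by
  have : (Finset.univ : Finset (Fin n)).filter (fun i : Fin n => (i:ℕ) ≤ k) = Finset.Iic ⟨k, h⟩ := by
    ext i; simp [Fin.le_def]
  rw [this, Fin.card_Iic]

lemma fin_card_ge (n v : ℕ) :
    ((Finset.univ : Finset (Fin n)).filter (fun j : Fin n => v ≤ (j:ℕ))).card = n - v := by
  rcases lt_or_ge v n with h | h
  · have : (Finset.univ : Finset (Fin n)).filter (fun j : Fin n => v ≤ (j:ℕ)) = Finset.Ici ⟨v, h⟩ := by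
      ext i; simp [Fin.le_def]
    rw [this, Fin.card_Ici]
  · have : (Finset.univ : Finset (Fin n)).filter (fun j : Fin n => v ≤ (j:ℕ)) = ∅ := by
      ext i; simp; omega
    rw [this]; simp; omega

lemma fin_card_eq (n v : ℕ) (h : v < n) :
    ((Finset.univ : Finset (Fin n)).filter (fun j : Fin n => (j:ℕ) = v)).card = 1 := by
  have : (Finset.univ : Finset (Fin n)).filter (fun j : Fin n => (j:ℕ) = v) = {⟨v, h⟩} := by
    ext i; simp [Fin.ext_iff]
  rw [this, Finset.card_singleton]

lemma btk_aux
    {E : Type*} [NormedAddCommGroup E] [NormedSpace ℝ E]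
    (a b : ℕ) (ha : 1 ≤ a) (hab : a ≤ b)
    (x : Fin a → E) (y : Fin b → E)
    (hA : ∀ i j : Fin a, i ≠ j → 1 ≤ ‖x i - x j‖)
    (hB : ∀ i j : Fin b, i ≠ j → 1 ≤ ‖y i - y j‖)
    (f : E →L[ℝ] ℝ) (hf : ∀ z : E, |f z| ≤ ‖z‖)
    (hxmono : Monotone (fun i => f (x i))) (hymono : Monotone (fun i => f (y i)))
    (hAf : ∀ i j : Fin a, i ≠ j → 1 / 2 ≤ |f (x i) - f (x j)|)
    (hBf : ∀ i j : Fin b, i ≠ j → 1 / 2 ≤ |f (y i) - f (y j)|) :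
    ∃ c : Fin a × Fin b → Fin (min a b),
      (∀ t : Fin (min a b),
        (Finset.univ.filter (fun p : Fin a × Fin b => c p = t)).card
          = max a b - min a b + 1 + 2 * (t : ℕ)) ∧
      (∀ p q : Fin a × Fin b, p ≠ q → c p = c q →
        1 ≤ ‖(x p.1 + y p.2) - (x q.1 + y q.2)‖ ∧
        1 / 2 ≤ |f (x p.1 + y p.2) - f (x q.1 + y q.2)|) := by
  have hmin : min a b = a := min_eq_left hab
  have hmax : max a b = b := max_eq_right hab
  set cf : Fin a × Fin b → ℕ :=
    fun p => if (p.1:ℕ) + (p.2:ℕ) ≤ a - 1 then a - 1 - (p.2:ℕ) else (p.1:ℕ) with hcf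
  have hlt : ∀ p, cf p < min a b := by
    intro p
    have h1 := p.1.isLt
    simp only [hcf, hmin]
    split <;> omega
  have hchar : ∀ (p : Fin a × Fin b) (t : ℕ), t < a →
      (cf p = t ↔ ((p.1:ℕ) ≤ t ∧ (p.2:ℕ) = a - 1 - t) ∨ ((p.1:ℕ) = t ∧ a - t ≤ (p.2:ℕ))) := by
    intro p t ht
    have h1 := p.1.isLt
    have h2 := p.2.isLt
    simp only [hcf]
    split <;> omega
  have hcomp : ∀ p q : Fin a × Fin b, cf p = cf q →
      ((p.1:ℕ) ≤ (q.1:ℕ) ∧ (p.2:ℕ) ≤ (q.2:ℕ)) ∨ ((q.1:ℕ) ≤ (p.1:ℕ) ∧ (q.2:ℕ) ≤ (p.2:ℕ)) := by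
    intro p q h
    simp only [hcf] at h
    split at h <;> split at h <;> omega
  have key : ∀ p q : Fin a × Fin b, p ≠ q → (p.1:ℕ) ≤ (q.1:ℕ) → (p.2:ℕ) ≤ (q.2:ℕ) →
      1 ≤ ‖(x p.1 + y p.2) - (x q.1 + y q.2)‖ ∧
      1 / 2 ≤ |f (x p.1 + y p.2) - f (x q.1 + y q.2)| := by
    intro p q hne h1 h2
    rcases eq_or_ne p.1 q.1 with he1 | hne1
    · have hne2 : p.2 ≠ q.2 := fun h2 => hne (Prod.ext he1 h2)
      have hd : (x p.1 + y p.2) - (x q.1 + y q.2) = y p.2 - y q.2 := by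
        rw [he1]; abel
      constructor
      · rw [hd]; exact hB _ _ hne2
      · have : f (x p.1 + y p.2) - f (x q.1 + y q.2) = f (y p.2) - f (y q.2) := by
          simp only [map_add, he1]; ring
        rw [this]; exact hBf _ _ hne2
    · rcases eq_or_ne p.2 q.2 with he2 | hne2
      · have hd : (x p.1 + y p.2) - (x q.1 + y q.2) = x p.1 - x q.1 := by
          rw [he2]; abel
        constructor
        · rw [hd]; exact hA _ _ hne1
        · have : f (x p.1 + y p.2) - f (x q.1 + y q.2) = f (x p.1) - f (x q.1) := by
            simp only [map_add, he2]; ring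
          rw [this]; exact hAf _ _ hne1
      · have hle1 : p.1 ≤ q.1 := by rwa [Fin.le_def]
        have hle2 : p.2 ≤ q.2 := by rwa [Fin.le_def]
        have dx : 1/2 ≤ f (x q.1) - f (x p.1) := by
          have := hAf p.1 q.1 hne1
          have hm : f (x p.1) ≤ f (x q.1) := hxmono hle1
          rw [abs_sub_comm, abs_of_nonneg (by linarith)] at this
          exact this
        have dy : 1/2 ≤ f (y q.2) - f (y p.2) := by
          have := hBf p.2 q.2 hne2
          have hm : f (y p.2) ≤ f (y q.2) := hymono hle2
          rw [abs_sub_comm, abs_of_nonneg (by linarith)] at this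
          exact this
        have habs : 1 ≤ |f (x p.1 + y p.2) - f (x q.1 + y q.2)| := by
          simp only [map_add]
          rw [abs_sub_comm]
          have h1 : (1:ℝ) ≤ f (x q.1) + f (y q.2) - (f (x p.1) + f (y p.2)) := by linarith
          exact le_trans h1 (le_abs_self _)
        refine ⟨?_, le_trans (by norm_num) habs⟩
        have heq : |f ((x p.1 + y p.2) - (x q.1 + y q.2))|
            = |f (x p.1 + y p.2) - f (x q.1 + y q.2)| := by rw [map_sub]
        calc (1:ℝ) ≤ |f ((x p.1 + y p.2) - (x q.1 + y q.2))| := by rw [heq]; exact habs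
          _ ≤ ‖(x p.1 + y p.2) - (x q.1 + y q.2)‖ := hf _
  refine ⟨fun p => ⟨cf p, hlt p⟩, ?_, ?_⟩
  · intro t
    have ht : (t:ℕ) < a := by have := t.isLt; omega
    have hfe : (Finset.univ.filter
        (fun p : Fin a × Fin b => (⟨cf p, hlt p⟩ : Fin (min a b)) = t))
        = Finset.univ.filter (fun p : Fin a × Fin b =>
            ((p.1:ℕ) ≤ (t:ℕ) ∧ (p.2:ℕ) = a - 1 - (t:ℕ)) ∨
            ((p.1:ℕ) = (t:ℕ) ∧ a - (t:ℕ) ≤ (p.2:ℕ))) := by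
      apply Finset.filter_congr
      intro p _
      rw [show ((⟨cf p, hlt p⟩ : Fin (min a b)) = t) ↔ cf p = (t:ℕ) from Fin.ext_iff]
      exact iff_iff_eq.mp (hchar p (t:ℕ) ht) ▸ Iff.rfl
    rw [hfe, Finset.filter_or, Finset.card_union_of_disjoint]
    · rw [← Finset.univ_product_univ,
        Finset.filter_product (fun i : Fin a => (i:ℕ) ≤ (t:ℕ))
          (fun j : Fin b => (j:ℕ) = a - 1 - (t:ℕ)),
        Finset.filter_product (fun i : Fin a => (i:ℕ) = (t:ℕ))
          (fun j : Fin b => a - (t:ℕ) ≤ (j:ℕ)),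
        Finset.card_product, Finset.card_product,
        fin_card_le a (t:ℕ) ht, fin_card_eq b (a - 1 - (t:ℕ)) (by omega),
        fin_card_eq a (t:ℕ) ht, fin_card_ge b (a - (t:ℕ))]
      obtain ⟨k, hk⟩ : ∃ k, (t:ℕ) = k := ⟨_, rfl⟩
      rw [hk]
      rw [hmin, hmax]
      omega
    · rw [Finset.disjoint_left]
      intro p hp1 hp2
      simp only [Finset.mem_filter] at hp1 hp2
      omega
  · intro p q hne hc
    have hcf : cf p = cf q := by
      have := Fin.ext_iff.mp hc
      simpa using this
    rcases hcomp p q hcf with ⟨h1, h2⟩ | ⟨h1, h2⟩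
    · exact key p q hne h1 h2
    · have := key q p (Ne.symm hne) h1 h2
      rw [norm_sub_rev, abs_sub_comm] at this
      exact this


theorem btk_chain_decomposition
    {E : Type*} [NormedAddCommGroup E] [NormedSpace ℝ E]
    (a b : ℕ) (ha : 1 ≤ a) (hb : 1 ≤ b)
    (x : Fin a → E) (y : Fin b → E)
    (hA : ∀ i j : Fin a, i ≠ j → 1 ≤ ‖x i - x j‖)
    (hB : ∀ i j : Fin b, i ≠ j → 1 ≤ ‖y i - y j‖)
    (υ : E) (hυ : ‖υ‖ = 1)
    (f : E →L[ℝ] ℝ) (hf : ∀ z : E, |f z| ≤ ‖z‖) (hfυ : f υ = 1)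
    (hxmono : Monotone (fun i => f (x i))) (hymono : Monotone (fun i => f (y i)))
    (hAf : ∀ i j : Fin a, i ≠ j → 1 / 2 ≤ |f (x i) - f (x j)|)
    (hBf : ∀ i j : Fin b, i ≠ j → 1 / 2 ≤ |f (y i) - f (y j)|) :
    ∃ c : Fin a × Fin b → Fin (min a b),
      (∀ t : Fin (min a b),
        (Finset.univ.filter (fun p : Fin a × Fin b => c p = t)).card
          = max a b - min a b + 1 + 2 * (t : ℕ)) ∧
      (∀ p q : Fin a × Fin b, p ≠ q → c p = c q →
        1 ≤ ‖(x p.1 + y p.2) - (x q.1 + y q.2)‖ ∧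
        1 / 2 ≤ |f (x p.1 + y p.2) - f (x q.1 + y q.2)|) := by
  rcases le_total a b with hab | hba
  · exact btk_aux a b ha hab x y hA hB f hf hxmono hymono hAf hBf
  · obtain ⟨c', h1, h2⟩ := btk_aux b a hb hba y x hB hA f hf hymono hxmono hBf hAf
    have hmm : min b a = min a b := min_comm b a
    refine ⟨fun p => Fin.cast hmm (c' (p.2, p.1)), ?_, ?_⟩
    · intro t
      have hcard := h1 (Fin.cast hmm.symm t)
      have hbij : (Finset.univ.filter
            (fun p : Fin a × Fin b => Fin.cast hmm (c' (p.2, p.1)) = t)).card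
          = (Finset.univ.filter
            (fun q : Fin b × Fin a => c' q = Fin.cast hmm.symm t)).card := by
        refine Finset.card_bij' (fun p _ => (p.2, p.1)) (fun q _ => (q.2, q.1))
          ?_ ?_ (fun p _ => rfl) (fun q _ => rfl)
        · intro p hp
          simp only [Finset.mem_filter, Finset.mem_univ, true_and] at hp ⊢
          rw [Fin.ext_iff] at hp ⊢
          simpa using hp
        · intro q hq
          simp only [Finset.mem_filter, Finset.mem_univ, true_and] at hq ⊢
          rw [Fin.ext_iff] at hq ⊢
          simpa using hq
      rw [hbij, hcard, Fin.coe_cast, max_comm b a, min_comm b a]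
    · intro p q hne hc
      have hc' : c' (p.2, p.1) = c' (q.2, q.1) := by
        rw [Fin.ext_iff] at hc ⊢
        simpa using hc
      have hne' : (p.2, p.1) ≠ (q.2, q.1) := by
        intro h
        apply hne
        rw [Prod.ext_iff] at h ⊢
        exact ⟨h.2, h.1⟩
      have hkey := h2 (p.2, p.1) (q.2, q.1) hne' hc'
      rw [add_comm (y p.2), add_comm (y q.2)] at hkey
      exact hkey
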